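/- arXiv:2106.14098 — 2 statements merged into one kernel-verified Lean document; each statement's English description precedes it below -/
import Mathlib

section
/- For every p₁, p₂ ∈ ℓ² and all s₁, s₂ ∈ ℝ, the sub-Riemannian geodesic distance on the infinite-dimensional Heisenberg group vanishes between the points (p₁,p₂,s₁) and (p₁,p₂,s₂): ρ((p₁,p₂,s₁),(p₁,p₂,s₂)) = 0. In particular, ρ is not positive on all pairs of distinct points of 𝓗. -/
open scoped RealInnerProductSpace
open Real

noncomputable section

abbrev l2 : Type := lp (fun _ : ℕ => ℝ) 2

abbrev Hei : Type := l2 × l2 × ℝ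

/-- The group operation of the infinite dimensional Heisenberg group. -/
def hMul (p q : Hei) : Hei :=
  (p.1 + q.1, p.2.1 + q.2.1, p.2.2 + q.2.2 + ⟪p.1, q.2.1⟫ - ⟪p.2.1, q.1⟫)

/-- The square of the weak norm `‖u‖_η`. -/
def etaSq (u : l2) : ℝ := ∑' k : ℕ, (u k)^2 / ((k : ℝ) + 1)

/-- The square of the weak Riemannian norm `‖v‖_{σ,p}`. -/
def sigmaSq (p v : Hei) : ℝ :=
  etaSq v.1 + etaSq v.2.1 + (v.2.2 - ⟪p.1, v.2.1⟫ + ⟪p.2.1, v.1⟫)^2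

def PiecewiseC1 (γ : ℝ → Hei) : Prop :=
  ContinuousOn γ (Set.Icc 0 1) ∧
  ∃ S : Finset ℝ, ∀ t ∈ Set.Icc (0:ℝ) 1, t ∉ S →
    DifferentiableAt ℝ γ t ∧ ContinuousAt (deriv γ) t

def Horizontal (γ : ℝ → Hei) : Prop :=
  ∀ t ∈ Set.Icc (0:ℝ) 1, DifferentiableAt ℝ γ t →
    deriv (fun s => (γ s).2.2) t
      = ⟪(γ t).1, deriv (fun s => (γ s).2.1) t⟫
        - ⟪(γ t).2.1, deriv (fun s => (γ s).1) t⟫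

def lenSigma (γ : ℝ → Hei) : ℝ :=
  ∫ t in (0:ℝ)..1, Real.sqrt (sigmaSq (γ t) (deriv γ t))

def lenG (γ : ℝ → Hei) : ℝ :=
  ∫ t in (0:ℝ)..1,
    Real.sqrt (etaSq (deriv (fun s => (γ s).1) t) + etaSq (deriv (fun s => (γ s).2.1) t))

def dSigma (p q : Hei) : ℝ :=
  sInf {L | ∃ γ : ℝ → Hei, PiecewiseC1 γ ∧ γ 0 = p ∧ γ 1 = q ∧ lenSigma γ = L}

def rho (p q : Hei) : ℝ :=
  sInf {L | ∃ γ : ℝ → Hei, PiecewiseC1 γ ∧ Horizontal γ ∧ γ 0 = p ∧ γ 1 = q ∧ lenG γ = L}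

def sigma0 (v w : Hei) : ℝ :=
  (∑' k : ℕ, ((v.1 k) * (w.1 k) + (v.2.1 k) * (w.2.1 k)) / ((k : ℝ) + 1)) + v.2.2 * w.2.2

def bracket (X Y : Hei) : Hei := (0, 0, 2 * (⟪X.1, Y.2.1⟫ - ⟪X.2.1, Y.1⟫))

/-- `eVec n` is the `(n+1)`-th standard basis vector of `ℓ²`. -/
def eVec (n : ℕ) : l2 := lp.single 2 n 1

def e3 : Hei := (0, 0, 1)


/- ### Auxiliary constructions for the proof -/

def myCurve (n : ℕ) (p₁ p₂ : l2) (s₁ c : ℝ) : ℝ → Hei := fun t =>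
  (p₁ + (Real.sin (2*π*t)) • eVec n,
   p₂ + (c * (1 - Real.cos (2*π*t))) • eVec n,
   s₁ + c * (p₁ n) * (1 - Real.cos (2*π*t)) - (p₂ n) * Real.sin (2*π*t)
      + c * (2*π*t - Real.sin (2*π*t)))

lemma inner_smul_eVec (u : l2) (a : ℝ) (n : ℕ) : ⟪u, a • eVec n⟫ = a * u n := by
  rw [real_inner_smul_right, eVec, lp.inner_single_right]
  simp [real_inner_comm]

lemma etaSq_smul_eVec (a : ℝ) (n : ℕ) : etaSq (a • eVec n) = a^2/((n:ℝ)+1) := by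
  rw [etaSq, tsum_eq_single n]
  · simp [eVec, lp.single_apply_self]
  · intro k hk
    simp [eVec, lp.single_apply_ne 2 n _ hk, Pi.single_apply, hk]

lemma curve_zero (n p₁ p₂ s₁ c) : myCurve n p₁ p₂ s₁ c 0 = (p₁, p₂, s₁) := by
  simp [myCurve]

lemma curve_one (n p₁ p₂ s₁ c) : myCurve n p₁ p₂ s₁ c 1 = (p₁, p₂, s₁ + c * (2*π)) := by
  simp [myCurve]

lemma hd_lin (t : ℝ) : HasDerivAt (fun s : ℝ => 2*π*s) (2*π) t := by
  simpa using (hasDerivAt_id t).const_mul (2*π)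

lemma hd_sin (t : ℝ) : HasDerivAt (fun s : ℝ => Real.sin (2*π*s)) (Real.cos (2*π*t) * (2*π)) t :=
  (Real.hasDerivAt_sin (2*π*t)).comp t (hd_lin t)

lemma hd_cos (t : ℝ) : HasDerivAt (fun s : ℝ => Real.cos (2*π*s)) (-Real.sin (2*π*t) * (2*π)) t :=
  (Real.hasDerivAt_cos (2*π*t)).comp t (hd_lin t)

lemma hd1 (n p₁ p₂ s₁ c) (t : ℝ) :
    HasDerivAt (fun s => (myCurve n p₁ p₂ s₁ c s).1)
      ((Real.cos (2*π*t) * (2*π)) • eVec n) t :=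
  ((hd_sin t).smul_const (eVec n)).const_add p₁

lemma hd2 (n p₁ p₂ s₁ c) (t : ℝ) :
    HasDerivAt (fun s => (myCurve n p₁ p₂ s₁ c s).2.1)
      ((c * (Real.sin (2*π*t) * (2*π))) • eVec n) t := by
  have h : HasDerivAt (fun s : ℝ => c * (1 - Real.cos (2*π*s)))
      (c * (Real.sin (2*π*t) * (2*π))) t := by
    have := ((hd_cos t).const_sub 1).const_mul c
    exact this.congr_deriv (by ring)
  exact (h.smul_const (eVec n)).const_add p₂

lemma hd3 (n p₁ p₂ s₁ c) (t : ℝ) :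
    HasDerivAt (fun s => (myCurve n p₁ p₂ s₁ c s).2.2)
      (c * (p₁ n) * (Real.sin (2*π*t) * (2*π)) - (p₂ n) * (Real.cos (2*π*t) * (2*π))
        + c * (2*π - Real.cos (2*π*t) * (2*π))) t := by
  have h1 : HasDerivAt (fun s : ℝ => s₁ + c * (p₁ n) * (1 - Real.cos (2*π*s)))
      (c * (p₁ n) * (Real.sin (2*π*t) * (2*π))) t := by
    have := (((hd_cos t).const_sub 1).const_mul (c * (p₁ n))).const_add s₁
    exact this.congr_deriv (by ring)
  have h2 : HasDerivAt (fun s : ℝ => (p₂ n) * Real.sin (2*π*s))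
      ((p₂ n) * (Real.cos (2*π*t) * (2*π))) t := (hd_sin t).const_mul _
  have h3 : HasDerivAt (fun s : ℝ => c * (2*π*s - Real.sin (2*π*s)))
      (c * (2*π - Real.cos (2*π*t) * (2*π))) t :=
    ((hd_lin t).sub (hd_sin t)).const_mul c
  exact (h1.sub h2).add h3

lemma hdC (n p₁ p₂ s₁ c) (t : ℝ) :
    HasDerivAt (myCurve n p₁ p₂ s₁ c)
      ((Real.cos (2*π*t) * (2*π)) • eVec n,
       (c * (Real.sin (2*π*t) * (2*π))) • eVec n,
       c * (p₁ n) * (Real.sin (2*π*t) * (2*π)) - (p₂ n) * (Real.cos (2*π*t) * (2*π))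
        + c * (2*π - Real.cos (2*π*t) * (2*π))) t :=
  (hd1 n p₁ p₂ s₁ c t).prodMk ((hd2 n p₁ p₂ s₁ c t).prodMk (hd3 n p₁ p₂ s₁ c t))

lemma curve_pw (n p₁ p₂ s₁ c) : PiecewiseC1 (myCurve n p₁ p₂ s₁ c) := by
  constructor
  · exact (continuous_iff_continuousAt.2 fun t =>
      (hdC n p₁ p₂ s₁ c t).differentiableAt.continuousAt).continuousOn
  · refine ⟨∅, fun t _ _ => ⟨(hdC n p₁ p₂ s₁ c t).differentiableAt, ?_⟩⟩
    have hde : deriv (myCurve n p₁ p₂ s₁ c) = fun t =>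
      ((Real.cos (2*π*t) * (2*π)) • eVec n,
       (c * (Real.sin (2*π*t) * (2*π))) • eVec n,
       c * (p₁ n) * (Real.sin (2*π*t) * (2*π)) - (p₂ n) * (Real.cos (2*π*t) * (2*π))
        + c * (2*π - Real.cos (2*π*t) * (2*π))) := funext fun t => (hdC n p₁ p₂ s₁ c t).deriv
    rw [hde]
    apply Continuous.continuousAt
    fun_prop

lemma curve_horiz (n p₁ p₂ s₁ c) : Horizontal (myCurve n p₁ p₂ s₁ c) := by
  intro t _ _
  rw [(hd3 n p₁ p₂ s₁ c t).deriv, (hd2 n p₁ p₂ s₁ c t).deriv, (hd1 n p₁ p₂ s₁ c t).deriv]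
  have e1 : (myCurve n p₁ p₂ s₁ c t).1 = p₁ + (Real.sin (2*π*t)) • eVec n := rfl
  have e2 : (myCurve n p₁ p₂ s₁ c t).2.1 = p₂ + (c * (1 - Real.cos (2*π*t))) • eVec n := rfl
  rw [e1, e2, inner_smul_eVec, inner_smul_eVec]
  have hcoe1 : ((p₁ + (Real.sin (2*π*t)) • eVec n : l2) : ℕ → ℝ) n
      = p₁ n + Real.sin (2*π*t) := by
    change p₁ n + Real.sin (2*π*t) * (eVec n) n = _
    simp [eVec, lp.single_apply_self]
  have hcoe2 : ((p₂ + (c * (1 - Real.cos (2*π*t))) • eVec n : l2) : ℕ → ℝ) n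
      = p₂ n + c * (1 - Real.cos (2*π*t)) := by
    change p₂ n + c * (1 - Real.cos (2*π*t)) * (eVec n) n = _
    simp [eVec, lp.single_apply_self]
  rw [hcoe1, hcoe2]
  linear_combination (-(2*π*c)) * Real.sin_sq_add_cos_sq (2*π*t)

lemma lenG_nonneg (γ : ℝ → Hei) : 0 ≤ lenG γ :=
  intervalIntegral.integral_nonneg (by norm_num) (fun t _ => Real.sqrt_nonneg _)

lemma curve_len (n p₁ p₂ s₁ c) :
    lenG (myCurve n p₁ p₂ s₁ c) ≤ Real.sqrt ((4*π^2*(1+c^2))/((n:ℝ)+1)) := by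
  have hint : (fun t => Real.sqrt (etaSq (deriv (fun s => (myCurve n p₁ p₂ s₁ c s).1) t)
      + etaSq (deriv (fun s => (myCurve n p₁ p₂ s₁ c s).2.1) t)))
      = fun t => Real.sqrt (((Real.cos (2*π*t) * (2*π))^2
        + (c * (Real.sin (2*π*t) * (2*π)))^2)/((n:ℝ)+1)) := by
    funext t
    rw [(hd1 n p₁ p₂ s₁ c t).deriv, (hd2 n p₁ p₂ s₁ c t).deriv,
      etaSq_smul_eVec, etaSq_smul_eVec, ← add_div]
  rw [lenG, hint]
  have hb : ∀ t ∈ Set.Icc (0:ℝ) 1,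
      Real.sqrt (((Real.cos (2*π*t) * (2*π))^2 + (c * (Real.sin (2*π*t) * (2*π)))^2)/((n:ℝ)+1))
        ≤ Real.sqrt ((4*π^2*(1+c^2))/((n:ℝ)+1)) := by
    intro t _
    apply Real.sqrt_le_sqrt
    apply div_le_div_of_nonneg_right ?_ (by positivity)
    nlinarith [Real.sin_sq_add_cos_sq (2*π*t), Real.sin_sq_le_one (2*π*t),
      Real.cos_sq_le_one (2*π*t), sq_nonneg π, sq_nonneg (π*c)]
  calc (∫ t in (0:ℝ)..1, Real.sqrt (((Real.cos (2*π*t) * (2*π))^2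
        + (c * (Real.sin (2*π*t) * (2*π)))^2)/((n:ℝ)+1)))
      ≤ ∫ _t in (0:ℝ)..1, Real.sqrt ((4*π^2*(1+c^2))/((n:ℝ)+1)) := by
        apply intervalIntegral.integral_mono_on (by norm_num) ?_ ?_ hb
        · apply Continuous.intervalIntegrable
          apply Real.continuous_sqrt.comp
          fun_prop
        · exact intervalIntegrable_const
    _ = Real.sqrt ((4*π^2*(1+c^2))/((n:ℝ)+1)) := by
        simp


lemma rho_same_proj (p₁ p₂ : l2) (s₁ s₂ : ℝ) : rho (p₁, p₂, s₁) (p₁, p₂, s₂) = 0 := by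
  set c : ℝ := (s₂ - s₁) / (2*π) with hc
  have hπ : (2*π) ≠ 0 := by positivity
  have hend : ∀ n : ℕ, myCurve n p₁ p₂ s₁ c 1 = (p₁, p₂, s₂) := by
    intro n
    rw [curve_one]
    have : s₁ + c * (2*π) = s₂ := by rw [hc, div_mul_cancel₀ _ hπ]; ring
    rw [this]
  set S : Set ℝ := {L | ∃ γ : ℝ → Hei, PiecewiseC1 γ ∧ Horizontal γ ∧ γ 0 = (p₁, p₂, s₁) ∧
      γ 1 = (p₁, p₂, s₂) ∧ lenG γ = L} with hS
  have hmem : ∀ n : ℕ, lenG (myCurve n p₁ p₂ s₁ c) ∈ S := fun n =>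
    ⟨myCurve n p₁ p₂ s₁ c, curve_pw n p₁ p₂ s₁ c, curve_horiz n p₁ p₂ s₁ c,
      curve_zero n p₁ p₂ s₁ c, hend n, rfl⟩
  have hlb : ∀ L ∈ S, (0:ℝ) ≤ L := by
    rintro L ⟨γ, _, _, _, _, rfl⟩
    exact lenG_nonneg γ
  have hbdd : BddBelow S := ⟨0, hlb⟩
  have h0 : (0:ℝ) ≤ sInf S := le_csInf ⟨_, hmem 0⟩ hlb
  have heq : rho (p₁, p₂, s₁) (p₁, p₂, s₂) = sInf S := rfl
  rw [heq]
  refine le_antisymm ?_ h0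
  by_contra hlt
  push_neg at hlt
  set δ := sInf S with hδ
  set C : ℝ := 4*π^2*(1+c^2) with hC
  have hCpos : 0 < C := by positivity
  obtain ⟨n, hn⟩ := exists_nat_gt (C / δ^2)
  have hbound : Real.sqrt (C / ((n:ℝ)+1)) < δ := by
    rw [Real.sqrt_lt' hlt]
    rw [div_lt_iff₀ (by positivity)]
    have h1 : C / δ^2 < (n:ℝ) + 1 := hn.trans (by linarith)
    rw [div_lt_iff₀ (by positivity)] at h1
    nlinarith
  have h2 := csInf_le hbdd (hmem n)
  have h3 := curve_len n p₁ p₂ s₁ c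
  rw [hC] at hbound
  linarith

/-- The sub-Riemannian geodesic distance `ρ` vanishes between points with the same
horizontal projection; in particular `ρ` is not positive on all pairs of distinct points. -/
theorem statement3 :
    (∀ (p₁ p₂ : l2) (s₁ s₂ : ℝ), rho (p₁, p₂, s₁) (p₁, p₂, s₂) = 0) ∧
    ¬ (∀ p q : Hei, p ≠ q → 0 < rho p q) := by
  refine ⟨rho_same_proj, fun h => ?_⟩
  have hne : ((0,0,0) : Hei) ≠ ((0,0,1) : Hei) := by
    simp [Prod.ext_iff]
  have := h _ _ hne
  rw [rho_same_proj 0 0 0 1] at this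
  exact lt_irrefl 0 this

end
end

section
/- Fix an integer j ≥ 1 and let a_{1j} = √j (e_j, 0, 0) and a_{2j} = √j (0, e_j, 0), which are σ₀-orthonormal. Then: (i) their Lie bracket is [a_{1j}, a_{2j}] = 2j e³ = (0,0,2j), and σ₀([a_{1j},a_{2j}],[a_{1j},a_{2j}]) = 4j²; (ii) σ₀([a_{2j},Z], a_{1j}) = 0 and σ₀([a_{1j},Z], a_{2j}) = 0 for all Z, i.e. B_σ(a_{1j},a_{2j}) = B_σ(a_{2j},a_{1j}) = 0; (iii) therefore Arnold's sectional curvature of the plane spanned by a_{1j} and a_{2j} equals K_σ(a_{1j}, a_{2j}) = −(3/4)σ₀([a_{1j},a_{2j}],[a_{1j},a_{2j}]) = −3j², so that K_σ(a_{1j}, a_{2j}) → −∞ as j → ∞. -/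
open scoped RealInnerProductSpace
open Real

noncomputable section

/-- `a₁ⱼ = √j e¹_j`. -/
def a1 (j : ℕ) : Hei := Real.sqrt j • ((eVec (j - 1), 0, 0) : Hei)

/-- `a₂ⱼ = √j e²_j`. -/
def a2 (j : ℕ) : Hei := Real.sqrt j • ((0, eVec (j - 1), 0) : Hei)

lemma eVec_apply (n k : ℕ) : (eVec n) k = if k = n then 1 else 0 := by
  rcases eq_or_ne k n with h | h
  · subst h; simp [eVec, lp.single_apply_self]
  · simp [eVec, lp.single_apply_ne 2 n 1 h, h]

lemma inner_eVec (n : ℕ) (f : l2) : ⟪eVec n, f⟫ = f n := by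
  rw [eVec, lp.inner_single_left]; simp [RCLike.inner_apply]

/-- `a₁ⱼ, a₂ⱼ` are `σ₀`-orthonormal, `[a₁ⱼ,a₂ⱼ] = 2j e³` with
`σ₀([a₁ⱼ,a₂ⱼ],[a₁ⱼ,a₂ⱼ]) = 4j²`, the adjoints `B_σ(a₁ⱼ,a₂ⱼ)` and `B_σ(a₂ⱼ,a₁ⱼ)`
vanish, and `K_σ(a₁ⱼ,a₂ⱼ) = −(3/4)σ₀([a₁ⱼ,a₂ⱼ],[a₁ⱼ,a₂ⱼ]) = −3j² → −∞`. -/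
theorem statement19 (j : ℕ) (hj : 1 ≤ j) :
    sigma0 (a1 j) (a1 j) = 1 ∧ sigma0 (a2 j) (a2 j) = 1 ∧ sigma0 (a1 j) (a2 j) = 0 ∧
    bracket (a1 j) (a2 j) = ((0, 0, 2 * (j : ℝ)) : Hei) ∧
    sigma0 (bracket (a1 j) (a2 j)) (bracket (a1 j) (a2 j)) = 4 * (j : ℝ)^2 ∧
    (∀ Z : Hei, sigma0 (bracket (a2 j) Z) (a1 j) = 0) ∧
    (∀ Z : Hei, sigma0 (bracket (a1 j) Z) (a2 j) = 0) ∧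
    -(3/4) * sigma0 (bracket (a1 j) (a2 j)) (bracket (a1 j) (a2 j)) = -3 * (j : ℝ)^2 ∧
    Filter.Tendsto (fun m : ℕ => -3 * (m : ℝ)^2) Filter.atTop Filter.atBot := by
  have hn : ((j - 1 : ℕ) : ℝ) + 1 = (j : ℝ) := by
    have h := Nat.succ_pred_eq_of_pos hj
    exact_mod_cast congrArg (Nat.cast (R := ℝ)) h
  have hjpos : (0:ℝ) < j := by exact_mod_cast hj
  have hs : Real.sqrt j * Real.sqrt j = (j : ℝ) := Real.mul_self_sqrt hjpos.le
  have h11 : sigma0 (a1 j) (a1 j) = 1 := by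
    simp only [sigma0, a1, Prod.smul_fst, Prod.smul_snd, smul_zero, Prod.fst_zero, Prod.snd_zero]
    rw [tsum_eq_single (j-1) (by
      intro k hk
      simp [lp.coeFn_smul, Pi.smul_apply, eVec_apply, hk])]
    simp [lp.coeFn_smul, Pi.smul_apply, eVec_apply, hn, hs]
    omega
  have h22 : sigma0 (a2 j) (a2 j) = 1 := by
    simp only [sigma0, a2, Prod.smul_fst, Prod.smul_snd, smul_zero, Prod.fst_zero, Prod.snd_zero]
    rw [tsum_eq_single (j-1) (by
      intro k hk
      simp [lp.coeFn_smul, Pi.smul_apply, eVec_apply, hk])]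
    simp [lp.coeFn_smul, Pi.smul_apply, eVec_apply, hn, hs]
    omega
  have h12 : sigma0 (a1 j) (a2 j) = 0 := by
    simp only [sigma0, a1, a2, Prod.smul_fst, Prod.smul_snd, smul_zero, Prod.fst_zero,
      Prod.snd_zero]
    simp
  have hbr : bracket (a1 j) (a2 j) = ((0, 0, 2 * (j : ℝ)) : Hei) := by
    simp only [bracket, a1, a2, Prod.smul_fst, Prod.smul_snd, smul_zero, Prod.fst_zero,
      Prod.snd_zero]
    rw [real_inner_smul_left, real_inner_smul_right, inner_eVec, eVec_apply]
    simp [hs]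
  have hbb : sigma0 (bracket (a1 j) (a2 j)) (bracket (a1 j) (a2 j)) = 4 * (j : ℝ)^2 := by
    rw [hbr]; simp [sigma0]; ring
  refine ⟨h11, h22, h12, hbr, hbb, ?_, ?_, by rw [hbb]; ring, ?_⟩
  · intro Z
    simp [sigma0, bracket, a1]
  · intro Z
    simp [sigma0, bracket, a2]
  · apply Filter.Tendsto.const_mul_atTop_of_neg (by norm_num)
    exact (Filter.tendsto_pow_atTop two_ne_zero).comp tendsto_natCast_atTop_atTop

end
end
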